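/- If v is a smooth solution of the Sturm-Liouville problem -(v' φ γ)' = λ v φ γ on (α,β) with v'(α)φ(α) = v'(β)φ(β) = 0, where γ(x) = e^{-x²/2} and φ is a positive C² function, then the function w = v' φ^{1/2} satisfies -w'' + x w' + w[ -φ''/(2φ) + (3/4)(φ'/φ)² - (x/2)(φ'/φ) ] = (λ - 1) w on (α,β) with w(α) = w(β) = 0. -/

import Mathlib

open Real MeasureTheory

/-- The substitution `w = v' φ^{1/2}` transforms a solution of the weighted Neumann
Sturm–Liouville problem `-(v' φ γ)' = λ v φ γ`, `v'(α)φ(α) = v'(β)φ(β) = 0`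
(where `γ(x) = e^{-x²/2}`) into a solution of the Dirichlet problem
`-w'' + x w' + w[-φ''/(2φ) + (3/4)(φ'/φ)² - (x/2)(φ'/φ)] = (λ-1) w`, `w(α) = w(β) = 0`. -/
theorem stmt2 (α β lam : ℝ) (hab : α < β) (φ v : ℝ → ℝ)
    (hφ : ContDiff ℝ 2 φ) (hφpos : ∀ x ∈ Set.Icc α β, 0 < φ x)
    (hv : ContDiff ℝ 3 v)
    (heq : ∀ x ∈ Set.Ioo α β,
      -(deriv (fun t => deriv v t * φ t * Real.exp (-t^2/2)) x)
        = lam * v x * φ x * Real.exp (-x^2/2))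
    (hbc1 : deriv v α * φ α = 0) (hbc2 : deriv v β * φ β = 0) :
    let w : ℝ → ℝ := fun x => deriv v x * Real.sqrt (φ x)
    (∀ x ∈ Set.Ioo α β,
      -(deriv (deriv w) x) + x * deriv w x
        + w x * (-(deriv (deriv φ) x) / (2 * φ x) + 3/4 * (deriv φ x / φ x)^2
            - x/2 * (deriv φ x / φ x))
        = (lam - 1) * w x) ∧ w α = 0 ∧ w β = 0 := by
  intro w
  -- differentiability facts
  have hφ1 : ContDiff ℝ 1 (deriv φ) :=
    ((contDiff_succ_iff_deriv (n := 1)).mp (by exact_mod_cast hφ)).2.2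
  have hv2 : ContDiff ℝ 2 (deriv v) :=
    ((contDiff_succ_iff_deriv (n := 2)).mp (by exact_mod_cast hv)).2.2
  have hv1 : ContDiff ℝ 1 (deriv (deriv v)) :=
    ((contDiff_succ_iff_deriv (n := 1)).mp (by exact_mod_cast hv2)).2.2
  have Dφ : ∀ y, HasDerivAt φ (deriv φ y) y := fun y =>
    ((hφ.differentiable (by norm_num)) y).hasDerivAt
  have Dφ2 : ∀ y, HasDerivAt (deriv φ) (deriv (deriv φ) y) y := fun y =>
    ((hφ1.differentiable (by norm_num)) y).hasDerivAt
  have Dv : ∀ y, HasDerivAt v (deriv v y) y := fun y =>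
    ((hv.differentiable (by norm_num)) y).hasDerivAt
  have Dv2 : ∀ y, HasDerivAt (deriv v) (deriv (deriv v) y) y := fun y =>
    ((hv2.differentiable (by norm_num)) y).hasDerivAt
  have Dv3 : ∀ y, HasDerivAt (deriv (deriv v)) (deriv (deriv (deriv v)) y) y := fun y =>
    ((hv1.differentiable (by norm_num)) y).hasDerivAt
  have hγ : ∀ y : ℝ, HasDerivAt (fun t => Real.exp (-t^2/2)) (-y * Real.exp (-y^2/2)) y := by
    intro y
    have h1 : HasDerivAt (fun t : ℝ => -t^2/2) (-y) y := by
      have := ((hasDerivAt_pow 2 y).neg).div_const 2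
      exact this.congr_deriv (by norm_num; ring)
    simpa [mul_comm] using h1.exp
  have hφα : φ α ≠ 0 := ne_of_gt (hφpos α ⟨le_refl _, le_of_lt hab⟩)
  have hφβ : φ β ≠ 0 := ne_of_gt (hφpos β ⟨le_of_lt hab, le_refl _⟩)
  refine ⟨?_, ?_, ?_⟩
  · intro x hx
    have hφx : 0 < φ x := hφpos x ⟨le_of_lt hx.1, le_of_lt hx.2⟩
    set s := Real.sqrt (φ x) with hsdef
    have hspos : 0 < s := Real.sqrt_pos.mpr hφx
    have hsne : s ≠ 0 := ne_of_gt hspos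
    have hp : φ x = s ^ 2 := (Real.sq_sqrt hφx.le).symm
    -- E1 at any point of Ioo
    have E1 : ∀ y ∈ Set.Ioo α β,
        deriv (deriv v) y * φ y + deriv v y * deriv φ y - y * (deriv v y * φ y)
          + lam * v y * φ y = 0 := by
      intro y hy
      have hprod : HasDerivAt (fun t => deriv v t * φ t * Real.exp (-t^2/2))
          ((deriv (deriv v) y * φ y + deriv v y * deriv φ y) * Real.exp (-y^2/2)
            + deriv v y * φ y * (-y * Real.exp (-y^2/2))) y :=
        ((Dv2 y).mul (Dφ y)).mul (hγ y)
      have h := heq y hy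
      rw [hprod.deriv] at h
      have hexp : (0:ℝ) < Real.exp (-y^2/2) := Real.exp_pos _
      nlinarith [h, hexp]
    -- E2 : derivative of E1 at x
    have E2 : (deriv (deriv (deriv v)) x * φ x + deriv (deriv v) x * deriv φ x
          + (deriv (deriv v) x * deriv φ x + deriv v x * deriv (deriv φ) x))
        - (1 * (deriv v x * φ x) + x * (deriv (deriv v) x * φ x + deriv v x * deriv φ x))
        + (lam * (deriv v x * φ x) + lam * v x * deriv φ x) = 0 := by
      have hFd : HasDerivAt (fun y => deriv (deriv v) y * φ y + deriv v y * deriv φ y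
          - y * (deriv v y * φ y) + lam * v y * φ y)
          ((deriv (deriv (deriv v)) x * φ x + deriv (deriv v) x * deriv φ x
              + (deriv (deriv v) x * deriv φ x + deriv v x * deriv (deriv φ) x))
            - (1 * (deriv v x * φ x) + x * (deriv (deriv v) x * φ x + deriv v x * deriv φ x))
            + (lam * (deriv v x * φ x) + lam * v x * deriv φ x)) x := by
        exact ((((Dv3 x).mul (Dφ x)).add ((Dv2 x).mul (Dφ2 x))).sub
          ((hasDerivAt_id x).mul ((Dv2 x).mul (Dφ x)))).add
          ((((Dv x).const_mul lam).mul (Dφ x)).congr_deriv (by ring))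
      have hFeq : (fun y => deriv (deriv v) y * φ y + deriv v y * deriv φ y
          - y * (deriv v y * φ y) + lam * v y * φ y) =ᶠ[nhds x] (fun _ => (0:ℝ)) :=
        Filter.eventuallyEq_of_mem (isOpen_Ioo.mem_nhds hx) (fun y hy => E1 y hy)
      have h0 : HasDerivAt (fun _ : ℝ => (0:ℝ)) _ x := hFd.congr_of_eventuallyEq hFeq.symm
      exact (h0.unique (hasDerivAt_const x 0))
    -- first derivative of w
    have hS : IsOpen {y : ℝ | 0 < φ y} := isOpen_lt continuous_const hφ.continuous
    have hxS : x ∈ {y : ℝ | 0 < φ y} := hφx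
    have hw' : ∀ y ∈ {y : ℝ | 0 < φ y}, HasDerivAt w
        (deriv (deriv v) y * Real.sqrt (φ y)
          + deriv v y * (deriv φ y / (2 * Real.sqrt (φ y)))) y := by
      intro y hy
      exact (Dv2 y).mul ((Dφ y).sqrt (ne_of_gt hy))
    have hw1 : deriv w x = deriv (deriv v) x * s + deriv v x * (deriv φ x / (2 * s)) :=
      (hw' x hxS).deriv
    -- second derivative of w
    have hD1 : HasDerivAt (fun y => deriv (deriv v) y * Real.sqrt (φ y)
          + deriv v y * (deriv φ y / (2 * Real.sqrt (φ y))))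
        ((deriv (deriv (deriv v)) x * s + deriv (deriv v) x * (deriv φ x / (2 * s)))
          + (deriv (deriv v) x * (deriv φ x / (2 * s))
            + deriv v x * ((deriv (deriv φ) x * (2 * s)
                - deriv φ x * (2 * (deriv φ x / (2 * s)))) / (2 * s) ^ 2))) x := by
      exact ((Dv3 x).mul ((Dφ x).sqrt (ne_of_gt hφx))).add
        ((Dv2 x).mul ((Dφ2 x).div (((Dφ x).sqrt (ne_of_gt hφx)).const_mul 2)
          (by positivity)))
    have hw2 : deriv (deriv w) x
        = (deriv (deriv (deriv v)) x * s + deriv (deriv v) x * (deriv φ x / (2 * s)))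
          + (deriv (deriv v) x * (deriv φ x / (2 * s))
            + deriv v x * ((deriv (deriv φ) x * (2 * s)
                - deriv φ x * (2 * (deriv φ x / (2 * s)))) / (2 * s) ^ 2)) := by
      have hev : deriv w =ᶠ[nhds x] (fun y => deriv (deriv v) y * Real.sqrt (φ y)
          + deriv v y * (deriv φ y / (2 * Real.sqrt (φ y)))) :=
        Filter.eventuallyEq_of_mem (hS.mem_nhds hxS) (fun y hy => (hw' y hy).deriv)
      rw [hev.deriv_eq]
      exact hD1.deriv
    have hwx : w x = deriv v x * s := rfl
    -- solve for v'' and v'''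
    have E1x := E1 x hx
    rw [hp] at E1x E2 ⊢
    have hC : deriv (deriv v) x
        = x * deriv v x - deriv v x * deriv φ x / s ^ 2 - lam * v x := by
      field_simp
      linarith [E1x]
    have hD : deriv (deriv (deriv v)) x
        = (1 * (deriv v x * s ^ 2) + x * (deriv (deriv v) x * s ^ 2 + deriv v x * deriv φ x)
            - (lam * (deriv v x * s ^ 2) + lam * v x * deriv φ x)
            - 2 * (deriv (deriv v) x * deriv φ x) - deriv v x * deriv (deriv φ) x) / s ^ 2 := by
      field_simp
      linarith [E2]
    rw [hw2, hw1, hwx, hD, hC]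
    field_simp
    ring
  · show deriv v α * Real.sqrt (φ α) = 0
    have : deriv v α = 0 := by
      rcases mul_eq_zero.mp hbc1 with h | h
      · exact h
      · exact absurd h hφα
    simp [this]
  · show deriv v β * Real.sqrt (φ β) = 0
    have : deriv v β = 0 := by
      rcases mul_eq_zero.mp hbc2 with h | h
      · exact h
      · exact absurd h hφβ
    simp [this]
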